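/- Let n ≥ 1. For ν ∈ ℤ^n let ν₋ denote the unique non-decreasing rearrangement of ν, ρ = (n−1, n−2, …, 1, 0) ∈ ℤ^n and d(ν) = (ν − ν₋)·ρ. In the polynomial ring ℤ[x₁^{±1},…,x_n^{±1}][q] (Laurent in the x's, polynomial in q), the ℤ-submodule A = ⊕_{ν∈ℤ^n} x^ν · q^{d(ν)} · ℤ[q], i.e. the ℤ-span of all monomials x^ν q^j with ν ∈ ℤ^n and j ≥ d(ν), is a ℤ[q]-subalgebra (it contains 1 and is closed under multiplication). -/

import Mathlib

open Finset

/-- `ρ = (n-1, n-2, ..., 1, 0) ∈ ℤ^n`. -/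
def rhoVec (n : ℕ) : Fin n → ℤ := fun i => (n : ℤ) - 1 - (i : ℕ)

/-- The unique non-decreasing rearrangement `ν₋` of `ν`. -/
def antidom {n : ℕ} (ν : Fin n → ℤ) : Fin n → ℤ := ν ∘ (Tuple.sort ν)

/-- `d(ν) = (ν - ν₋) · ρ`. -/
def dcoef {n : ℕ} (ν : Fin n → ℤ) : ℤ :=
  ∑ i, (ν i - antidom ν i) * rhoVec n i

/-- The ring `ℤ[x₁^{±1},…,x_n^{±1}][q]`, realized as the monoid algebra of `ℤ^n × ℕ`:
the monomial `x^ν q^j` is `Finsupp.single (ν, j) 1`. -/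
abbrev Amb (n : ℕ) := AddMonoidAlgebra ℤ ((Fin n → ℤ) × ℕ)

/-- The ℤ-submodule `A = ⊕_ν x^ν q^{d(ν)} ℤ[q]`, i.e. the ℤ-span of the monomials
`x^ν q^j` with `j ≥ d(ν)`. -/
noncomputable def Asub (n : ℕ) : Submodule ℤ (Amb n) :=
  Submodule.span ℤ
    {m : Amb n | ∃ (ν : Fin n → ℤ) (j : ℕ), dcoef ν ≤ (j : ℤ) ∧ m = AddMonoidAlgebra.single (ν, j) 1}

lemma antivary_antidom_rho {n : ℕ} (ν : Fin n → ℤ) :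
    Antivary (antidom ν) (rhoVec n) := by
  intro i j hij
  have hji : j < i := by
    by_contra h
    push_neg at h
    have : rhoVec n j ≤ rhoVec n i := by
      unfold rhoVec
      have : (i : ℤ) ≤ j := by exact_mod_cast Fin.le_iff_val_le_val.mp h
      omega
    omega
  exact Tuple.monotone_sort ν hji.le

lemma key {n : ℕ} (ν : Fin n → ℤ) (σ : Equiv.Perm (Fin n)) :
    ∑ i, antidom ν i * rhoVec n i ≤ ∑ i, ν (σ i) * rhoVec n i := by
  have h := (antivary_antidom_rho ν).sum_smul_le_sum_comp_perm_smul
    (σ := σ.trans (Tuple.sort ν)⁻¹)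
  simp only [smul_eq_mul] at h
  convert h using 2 with i
  · rfl
  · simp [antidom, Equiv.trans_apply, Function.comp]

lemma dcoef_add_le {n : ℕ} (ν μ : Fin n → ℤ) :
    dcoef (ν + μ) ≤ dcoef ν + dcoef μ := by
  unfold dcoef
  have h1 := key ν (Tuple.sort (ν + μ))
  have h2 := key μ (Tuple.sort (ν + μ))
  have h3 : ∀ i, antidom (ν + μ) i = ν (Tuple.sort (ν + μ) i) + μ (Tuple.sort (ν + μ) i) := by
    intro i; simp [antidom]
  simp only [sub_mul, Finset.sum_sub_distrib, Pi.add_apply, h3, add_mul,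
    Finset.sum_add_distrib]
  omega

lemma gen_mem {n : ℕ} (ν : Fin n → ℤ) (j : ℕ) (h : dcoef ν ≤ (j : ℤ)) :
    (AddMonoidAlgebra.single (ν, j) (1 : ℤ) : Amb n) ∈ Asub n :=
  Submodule.subset_span ⟨ν, j, h, rfl⟩

lemma dcoef_zero {n : ℕ} : dcoef (0 : Fin n → ℤ) = 0 := by
  simp [dcoef, antidom]

theorem stmt1 (n : ℕ) (hn : 1 ≤ n) :
    (1 : Amb n) ∈ Asub n ∧
    (AddMonoidAlgebra.single ((0 : Fin n → ℤ), (1 : ℕ)) (1 : ℤ) : Amb n) ∈ Asub n ∧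
    ∀ a ∈ Asub n, ∀ b ∈ Asub n, a * b ∈ Asub n := by
  refine ⟨?_, ?_, ?_⟩
  · have : (1 : Amb n) = AddMonoidAlgebra.single ((0 : Fin n → ℤ), (0 : ℕ)) 1 := rfl
    rw [this]
    exact gen_mem _ _ (by simp [dcoef_zero])
  · exact gen_mem _ _ (by simp [dcoef_zero])
  · intro a ha b hb
    induction ha using Submodule.span_induction with
    | mem x hx =>
      induction hb using Submodule.span_induction with
      | mem y hy =>
        obtain ⟨ν, j, hνj, rfl⟩ := hx
        obtain ⟨μ, k, hμk, rfl⟩ := hy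
        rw [AddMonoidAlgebra.single_mul_single]
        have : dcoef (ν + μ) ≤ ((j + k : ℕ) : ℤ) := by
          push_cast
          calc dcoef (ν + μ) ≤ dcoef ν + dcoef μ := dcoef_add_le ν μ
            _ ≤ (j : ℤ) + k := by omega
        simpa using gen_mem (ν + μ) (j + k) this
      | zero => simp [Submodule.zero_mem]
      | add y z _ _ hy hz => rw [mul_add]; exact Submodule.add_mem _ hy hz
      | smul c y _ hy => rw [mul_smul_comm]; exact Submodule.smul_mem _ _ hy
    | zero => simp [Submodule.zero_mem]
    | add y z _ _ hy hz => rw [add_mul]; exact Submodule.add_mem _ hy hz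
    | smul c y _ hy => rw [smul_mul_assoc]; exact Submodule.smul_mem _ _ hy
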